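/- Let H be a real Hilbert space, γ > 0, and let 𝕎 be a self-adjoint continuous linear operator on H with γ‖𝕎‖_op < 1. Then Id − γ𝕎 is invertible and for every f ∈ H, ⟨(Id − γ𝕎)⁻²f, f⟩ ≥ ‖f‖² / (1 + γ‖𝕎‖_op)²; i.e., the squared resolvent (Id − γ𝕎)⁻² is strongly monotone with constant (1 + γ‖𝕎‖_op)^{−2}. -/

import Mathlib

open scoped RealInnerProductSpace

/-- strong monotonicity of the squared resolvent `(Id - γ𝕎)⁻²` on a real
Hilbert space, with constant `(1 + γ‖𝕎‖)⁻²`. -/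
theorem stmt2 {H : Type*} [NormedAddCommGroup H] [InnerProductSpace ℝ H] [CompleteSpace H]
    (γ : ℝ) (hγ : 0 < γ) (W : H →L[ℝ] H)
    (hsa : ∀ f g : H, ⟪W f, g⟫ = ⟪f, W g⟫)
    (hW : γ * ‖W‖ < 1) :
    IsUnit (1 - γ • W) ∧
      ∀ f : H, ‖f‖ ^ 2 / (1 + γ * ‖W‖) ^ 2 ≤ ⟪(Ring.inverse (1 - γ • W) ^ 2) f, f⟫ := by
  have hnorm : ‖γ • W‖ < 1 := by
    have := norm_smul γ W
    rw [this, Real.norm_of_nonneg hγ.le]; exact hW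
  have hu : IsUnit (1 - γ • W) := (Units.oneSub (γ • W) hnorm).isUnit
  refine ⟨hu, fun f => ?_⟩
  set T : H →L[ℝ] H := 1 - γ • W with hT
  set S : H →L[ℝ] H := Ring.inverse T with hS
  have hTS : T * S = 1 := Ring.mul_inverse_cancel T hu
  have hST : S * T = 1 := Ring.inverse_mul_cancel T hu
  -- self-adjointness of T
  have hTsa : ∀ u v : H, ⟪T u, v⟫ = ⟪u, T v⟫ := by
    intro u v
    simp only [hT, ContinuousLinearMap.sub_apply, ContinuousLinearMap.one_apply,
      ContinuousLinearMap.smul_apply, inner_sub_left, inner_sub_right,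
      real_inner_smul_left, real_inner_smul_right, hsa]
  have hSsa : ∀ u v : H, ⟪S u, v⟫ = ⟪u, S v⟫ := by
    intro u v
    have h1 : v = T (S v) := by
      conv_lhs => rw [← ContinuousLinearMap.one_apply (F := H →L[ℝ] H) v, ← hTS]
      rfl
    have h2 : u = T (S u) := by
      conv_lhs => rw [← ContinuousLinearMap.one_apply (F := H →L[ℝ] H) u, ← hTS]
      rfl
    calc ⟪S u, v⟫ = ⟪S u, T (S v)⟫ := by rw [← h1]
      _ = ⟪T (S u), S v⟫ := (hTsa _ _).symm
      _ = ⟪u, S v⟫ := by rw [← h2]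
  set g : H := S f with hg
  have hTg : T g = f := by
    have := congrArg (fun A : H →L[ℝ] H => A f) hTS
    simpa using this
  -- ⟪S² f, f⟫ = ‖g‖²
  have key : ⟪(S ^ 2) f, f⟫ = ‖g‖ ^ 2 := by
    have h1 : (S ^ 2) f = S g := by rw [pow_two]; rfl
    have h2 : T (S g) = g := by
      have := congrArg (fun A : H →L[ℝ] H => A g) hTS
      simpa using this
    rw [h1, ← hTg, ← hTsa, h2, real_inner_self_eq_norm_sq]
  -- norm bound
  have hb : ‖f‖ ≤ (1 + γ * ‖W‖) * ‖g‖ := by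
    rw [← hTg]
    have : T g = g - γ • W g := by
      simp [hT, ContinuousLinearMap.sub_apply, ContinuousLinearMap.smul_apply]
    rw [this]
    calc ‖g - γ • W g‖ ≤ ‖g‖ + ‖γ • W g‖ := norm_sub_le _ _
      _ ≤ ‖g‖ + γ * (‖W‖ * ‖g‖) := by
          rw [norm_smul, Real.norm_of_nonneg hγ.le]
          gcongr
          exact W.le_opNorm g
      _ = (1 + γ * ‖W‖) * ‖g‖ := by ring
  have hpos : (0:ℝ) < 1 + γ * ‖W‖ := by positivity
  rw [hS, key, div_le_iff₀ (by positivity)]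
  calc ‖f‖ ^ 2 ≤ ((1 + γ * ‖W‖) * ‖g‖) ^ 2 := by
        apply pow_le_pow_left₀ (norm_nonneg f) hb
    _ = ‖g‖ ^ 2 * (1 + γ * ‖W‖) ^ 2 := by ring
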